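/- arXiv:math/0607745 — 3 statements merged into one kernel-verified Lean document; each statement's English description precedes it below -/
import Mathlib

section
/- Let ω : 𝒜 → ℂ⟦λ⟧ be a positive ℂ⟦λ⟧-linear functional on a unital *-algebra 𝒜 over ℂ⟦λ⟧. Then for all a, b ∈ 𝒜 the Cauchy–Schwarz inequality holds: ω(a* b) · (ω(a* b))* ≤ ω(a* a) · ω(b* b) in the ordered ring ℝ⟦λ⟧. -/
noncomputable def conjPS : PowerSeries ℂ →+* PowerSeries ℂ :=
  PowerSeries.map (starRingEnd ℂ)

noncomputable def PosR (a : PowerSeries ℝ) : Prop :=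
  a ≠ 0 ∧ 0 < PowerSeries.coeff a.order.toNat a

noncomputable def leR (x y : PowerSeries ℂ) : Prop :=
  ∃ d : PowerSeries ℝ, y - x = PowerSeries.map (algebraMap ℝ ℂ) d ∧ (d = 0 ∨ PosR d)

open PowerSeries

namespace CSaux

/-- alternative characterization of positivity -/
lemma posR_iff (d : PowerSeries ℝ) :
    PosR d ↔ ∃ n : ℕ, (∀ m < n, coeff m d = 0) ∧ 0 < coeff n d := by
  constructor
  · rintro ⟨h0, hpos⟩
    refine ⟨d.order.toNat, fun m hm => ?_, hpos⟩
    apply coeff_of_lt_order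
    have hfin : d.order < ⊤ := order_finite_iff_ne_zero.mpr h0
    lift d.order to ℕ using hfin.ne with N hN
    exact_mod_cast by simpa using hm
  · rintro ⟨n, hlow, hpos⟩
    have horder : d.order = n := order_eq_nat.mpr ⟨hpos.ne', hlow⟩
    have h0 : d ≠ 0 := by
      intro h; rw [h] at hpos; simp at hpos
    refine ⟨h0, ?_⟩
    rw [horder]; simpa using hpos

lemma posR_add {a b : PowerSeries ℝ} (ha : PosR a) (hb : PosR b) : PosR (a + b) := by
  rw [posR_iff] at *
  obtain ⟨n, hln, hn⟩ := ha
  obtain ⟨m, hlm, hm⟩ := hb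
  refine ⟨min n m, fun k hk => ?_, ?_⟩
  · simp only [map_add, hln k (lt_of_lt_of_le hk (min_le_left _ _)),
      hlm k (lt_of_lt_of_le hk (min_le_right _ _)), add_zero]
  · rcases le_total n m with h | h
    · rw [min_eq_left h, map_add]
      rcases eq_or_lt_of_le h with rfl | h'
      · positivity
      · rw [hlm n h', add_zero]; exact hn
    · rw [min_eq_right h, map_add]
      rcases eq_or_lt_of_le h with rfl | h'
      · positivity
      · rw [hln m h', zero_add]; exact hm

lemma posR_mul {a b : PowerSeries ℝ} (ha : PosR a) (hb : PosR b) : PosR (a * b) := by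
  rw [posR_iff] at *
  obtain ⟨n, hln, hn⟩ := ha
  obtain ⟨m, hlm, hm⟩ := hb
  refine ⟨n + m, fun k hk => ?_, ?_⟩
  · rw [coeff_mul]
    apply Finset.sum_eq_zero
    rintro ⟨i, j⟩ hij
    replace hij : i + j = k := by simpa using hij
    rcases lt_or_ge i n with h | h
    · simp [hln i h]
    · have : j < m := by omega
      simp [hlm j this]
  · rw [coeff_mul]
    rw [Finset.sum_eq_single (n, m)]
    · exact mul_pos hn hm
    · rintro ⟨i, j⟩ hij hne
      replace hij : i + j = n + m := by simpa using hij
      rcases lt_or_ge i n with h | h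
      · simp [hln i h]
      · have : j < m ∨ (i = n ∧ j = m) := by omega
        rcases this with h' | ⟨rfl, rfl⟩
        · simp [hlm j h']
        · simp at hne
    · intro h
      simp [Finset.mem_antidiagonal] at h

lemma posR_trichotomy {d : PowerSeries ℝ} (h0 : d ≠ 0) : PosR d ∨ PosR (-d) := by
  have hfin : d.order < ⊤ := order_finite_iff_ne_zero.mpr h0
  obtain ⟨N, hN⟩ : ∃ N : ℕ, d.order = N := by
    refine ⟨d.order.toNat, ?_⟩
    exact (ENat.coe_toNat hfin.ne).symm
  obtain ⟨hne, hlow⟩ := order_eq_nat.mp hN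
  have htn : d.order.toNat = N := by rw [hN]; exact ENat.toNat_coe N
  rcases lt_trichotomy (coeff N d) 0 with h | h | h
  · right
    rw [posR_iff]
    exact ⟨N, fun m hm => by simp [hlow m hm], by simpa using h⟩
  · exact absurd h hne
  · left; exact ⟨h0, by rw [htn]; exact h⟩

lemma posR_not_both {d : PowerSeries ℝ} (h : PosR d) (h' : PosR (-d)) : False := by
  rw [posR_iff] at h h'
  obtain ⟨n, hln, hn⟩ := h
  obtain ⟨m, hlm, hm⟩ := h'
  rcases lt_trichotomy n m with hc | rfl | hc
  · have := hlm n hc; simp at this; rw [this] at hn; simp at hn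
  · simp only [map_neg] at hm; linarith
  · have h1 := hln m hc
    have h2 : coeff m (-d) = 0 := by simp [h1]
    rw [h2] at hm; simp at hm

end CSaux

namespace CSaux

noncomputable abbrev φR : PowerSeries ℝ →+* PowerSeries ℂ := PowerSeries.map (algebraMap ℝ ℂ)

lemma phi_inj : Function.Injective φR := by
  intro a b h
  ext n
  have := congrArg (coeff n) h
  simp only [coeff_map] at this
  exact_mod_cast this

lemma conj_phi (d : PowerSeries ℝ) : conjPS (φR d) = φR d := by
  ext n
  simp [conjPS, coeff_map, Complex.conj_ofReal]

lemma conjPS_conjPS (x : PowerSeries ℂ) : conjPS (conjPS x) = x := by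
  ext n
  simp [conjPS, coeff_map]

lemma real_of_fixed {x : PowerSeries ℂ} (h : conjPS x = x) : ∃ d, x = φR d := by
  refine ⟨PowerSeries.mk fun n => (coeff n x).re, ?_⟩
  ext n
  have hc : (starRingEnd ℂ) (coeff n x) = coeff n x := by
    have := congrArg (coeff n) h
    simpa [conjPS, coeff_map] using this
  simp only [coeff_map, coeff_mk]
  rw [Complex.conj_eq_iff_re] at hc
  exact hc.symm

lemma cancel {c d : PowerSeries ℝ} (hc : PosR c) (h : c * d = 0 ∨ PosR (c * d)) :
    d = 0 ∨ PosR d := by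
  by_cases hd : d = 0
  · exact Or.inl hd
  rcases posR_trichotomy hd with h' | h'
  · exact Or.inr h'
  · exfalso
    rcases h with h | h
    · exact hd ((mul_eq_zero.mp h).resolve_left hc.1)
    · have := posR_mul hc h'
      rw [mul_neg] at this
      exact posR_not_both h this

lemma posR_two : PosR (2 : PowerSeries ℝ) := by
  rw [posR_iff]
  exact ⟨0, fun m hm => by omega, by rw [show ((2 : PowerSeries ℝ)) = PowerSeries.C 2 by simp [map_ofNat]]; simp⟩

end CSaux

namespace CSaux

variable {𝒜 : Type*} [Ring 𝒜] [Algebra (PowerSeries ℂ) 𝒜] [StarRing 𝒜]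

lemma expand2
    (hantilinear : ∀ (c : PowerSeries ℂ) (a : 𝒜), star (c • a) = conjPS c • star a)
    (ω : 𝒜 →ₗ[PowerSeries ℂ] PowerSeries ℂ) (s t : PowerSeries ℂ) (a b : 𝒜) :
    ω (star (s • a + t • b) * (s • a + t • b)) =
      conjPS s * s * ω (star a * a) + conjPS s * t * ω (star a * b) +
        conjPS t * s * ω (star b * a) + conjPS t * t * ω (star b * b) := by
  rw [star_add, hantilinear, hantilinear]
  rw [add_mul, mul_add, mul_add]
  simp only [smul_mul_assoc, mul_smul_comm, smul_smul, map_add, map_smul, smul_eq_mul]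
  ring

lemma conjPS_one : conjPS (1 : PowerSeries ℂ) = 1 := map_one _

noncomputable def IPS : PowerSeries ℂ := PowerSeries.C Complex.I

lemma conjPS_I : conjPS IPS = -IPS := by
  ext n
  simp [conjPS, IPS, PowerSeries.coeff_C, apply_ite]

lemma I_mul_I : IPS * IPS = -1 := by
  rw [IPS, ← map_mul, Complex.I_mul_I, map_neg, map_one]

lemma I_ne_zero : IPS ≠ 0 := by
  intro h
  have := congrArg (PowerSeries.constantCoeff) h
  simp [IPS, Complex.I_ne_zero] at this

lemma two_ne_zero' : (2 : PowerSeries ℂ) ≠ 0 := by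
  intro h
  have := congrArg (PowerSeries.constantCoeff) h
  rw [map_ofNat] at this
  norm_num at this

lemma herm
    (hantilinear : ∀ (c : PowerSeries ℂ) (a : 𝒜), star (c • a) = conjPS c • star a)
    (ω : 𝒜 →ₗ[PowerSeries ℂ] PowerSeries ℂ)
    (hpos : ∀ a : 𝒜, leR 0 (ω (star a * a))) (a b : 𝒜) :
    conjPS (ω (star a * b)) = ω (star b * a) := by
  have hreal : ∀ c : 𝒜, conjPS (ω (star c * c)) = ω (star c * c) := by
    intro c
    obtain ⟨d, hd, -⟩ := hpos c
    rw [sub_zero] at hd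
    rw [hd, conj_phi]
  set u := ω (star a * b) with hu
  set v := ω (star b * a) with hv
  set p := ω (star a * a) with hp
  set y := ω (star b * b) with hy
  have hpr : conjPS p = p := hreal a
  have hyr : conjPS y = y := hreal b
  -- s = t = 1
  have h1 : conjPS u + conjPS v = u + v := by
    have e1 := expand2 hantilinear ω 1 1 a b
    have r1 := hreal ((1 : PowerSeries ℂ) • a + (1 : PowerSeries ℂ) • b)
    rw [e1] at r1
    simp only [conjPS_one, one_mul, map_add, ← hu, ← hv, ← hp, ← hy, hpr, hyr] at r1
    have := r1
    linear_combination this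
  -- s = I, t = 1
  have h2 : conjPS u - conjPS v = v - u := by
    have e2 := expand2 hantilinear ω IPS 1 a b
    have r2 := hreal (IPS • a + (1 : PowerSeries ℂ) • b)
    rw [e2] at r2
    simp only [conjPS_one, conjPS_I, one_mul, mul_one, map_add, map_mul, map_neg, ← hu, ← hv, ← hp, ← hy, hpr, hyr,
      conjPS_conjPS] at r2
    -- r2 : (-IPS)*IPS*p + (-(-IPS))*conjPS u + (-IPS)*conjPS v + y
    --      = (-IPS)*IPS*p + (-IPS)*u + IPS*v + y
    have hI : IPS * (conjPS u - conjPS v) = IPS * (v - u) := by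
      linear_combination r2
    exact mul_left_cancel₀ I_ne_zero hI
  have h3 : 2 * conjPS u = 2 * v := by linear_combination h1 + h2
  exact mul_left_cancel₀ two_ne_zero' h3

end CSaux

open CSaux in
/-- Cauchy–Schwarz inequality for a positive `ℂ⟦λ⟧`-linear functional `ω` on a unital
`*`-algebra `𝒜` over `ℂ⟦λ⟧`: for all `a b`,
`ω(a* b) · (ω(a* b))* ≤ ω(a* a) · ω(b* b)` in the ordered ring `ℝ⟦λ⟧`. -/
theorem stmt3 {𝒜 : Type*} [Ring 𝒜] [Algebra (PowerSeries ℂ) 𝒜] [StarRing 𝒜]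
    (hantilinear : ∀ (c : PowerSeries ℂ) (a : 𝒜), star (c • a) = conjPS c • star a)
    (ω : 𝒜 →ₗ[PowerSeries ℂ] PowerSeries ℂ)
    (hpos : ∀ a : 𝒜, leR 0 (ω (star a * a))) :
    ∀ a b : 𝒜,
      leR (ω (star a * b) * conjPS (ω (star a * b))) (ω (star a * a) * ω (star b * b)) := by
  intro a b
  obtain ⟨dp, hdp, hdp'⟩ := hpos a
  obtain ⟨dy, hdy, hdy'⟩ := hpos b
  rw [sub_zero] at hdp hdy
  set z := ω (star a * b) with hz
  set p := ω (star a * a) with hp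
  set y := ω (star b * b) with hy
  have hvz : ω (star b * a) = conjPS z := (herm hantilinear ω hpos a b).symm
  obtain ⟨w, hw⟩ : ∃ w, z * conjPS z = φR w := by
    apply real_of_fixed
    rw [map_mul, conjPS_conjPS, mul_comm]
  have hpc : conjPS p = p := by rw [hdp, conj_phi]
  have hyc : conjPS y = y := by rw [hdy, conj_phi]
  rcases hdp' with hdp0 | hdpP
  · -- p = 0
    have hp0 : p = 0 := by rw [hdp, hdp0, map_zero]
    rcases hdy' with hdy0 | hdyP
    · -- p = y = 0 : use c = (-z) • a + 1 • b
      have hy0 : y = 0 := by rw [hdy, hdy0, map_zero]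
      obtain ⟨e, he, he'⟩ := hpos ((-z) • a + (1 : PowerSeries ℂ) • b)
      rw [sub_zero, expand2 hantilinear ω (-z) 1 a b] at he
      rw [← hz, ← hp, ← hy, hvz, conjPS_one, hp0, hy0] at he
      simp only [map_neg] at he
      have hkey : φR e = φR (2 * (-w)) := by
        rw [← he, map_mul, map_neg, ← hw]
        rw [show ((2:PowerSeries ℝ) : PowerSeries ℝ) = 2 from rfl]
        push_cast [map_ofNat]
        ring
      have he2 : e = 2 * (-w) := phi_inj hkey
      have hnn : -w = 0 ∨ PosR (-w) := cancel posR_two (he2 ▸ he')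
      refine ⟨-w, ?_, hnn⟩
      rw [hp0, hy0, map_neg, ← hw]
      ring
    · -- p = 0, PosR dy : use c = (-(conjPS z)) • b + y • a
      obtain ⟨e, he, he'⟩ := hpos ((-(conjPS z)) • b + y • a)
      rw [sub_zero, expand2 hantilinear ω (-(conjPS z)) y b a] at he
      rw [← hz, ← hp, ← hy, hvz, hyc, hp0] at he
      simp only [map_neg, conjPS_conjPS] at he
      have hkey : φR e = φR (dy * (-w)) := by
        rw [← he, map_mul, map_neg, ← hw, ← hdy]
        ring
      have he2 : e = dy * (-w) := phi_inj hkey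
      have hnn : -w = 0 ∨ PosR (-w) := cancel hdyP (he2 ▸ he')
      refine ⟨-w, ?_, hnn⟩
      rw [hp0, map_neg, ← hw]
      ring
  · -- PosR dp : use c = (-z) • a + p • b
    obtain ⟨e, he, he'⟩ := hpos ((-z) • a + p • b)
    rw [sub_zero, expand2 hantilinear ω (-z) p a b] at he
    rw [← hz, ← hp, ← hy, hvz, hpc] at he
    simp only [map_neg] at he
    have hkey : φR e = φR (dp * (dp * dy - w)) := by
      rw [← he, map_mul, map_sub, map_mul, ← hw, ← hdp, ← hdy]
      ring
    have he2 : e = dp * (dp * dy - w) := phi_inj hkey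
    have hnn : dp * dy - w = 0 ∨ PosR (dp * dy - w) := cancel hdpP (he2 ▸ he')
    refine ⟨dp * dy - w, ?_, hnn⟩
    rw [map_sub, map_mul, ← hw, ← hdp, ← hdy]
end

section
/- Let ω : 𝒜 → ℂ⟦λ⟧ be a state on a unital *-algebra 𝒜 over ℂ⟦λ⟧, and for a ∈ 𝒜 let Var_ω(a) = ω((a − ω(a)·1)* (a − ω(a)·1)) denote the variance. Then for all Hermitean elements f = f* and g = g* of 𝒜 the uncertainty relation 4 · Var_ω(f) · Var_ω(g) ≥ ω([f,g]) · (ω([f,g]))* holds in the ordered ring ℝ⟦λ⟧, where [f,g] = fg − gf is the commutator. -/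
/-- The variance of `a` in the state `ω`: `Var_ω(a) = ω((a - ω(a)·1)* (a - ω(a)·1))`. -/
noncomputable def Var {𝒜 : Type*} [Ring 𝒜] [Algebra (PowerSeries ℂ) 𝒜] [StarRing 𝒜]
    (ω : 𝒜 →ₗ[PowerSeries ℂ] PowerSeries ℂ) (a : 𝒜) : PowerSeries ℂ :=
  ω (star (a - ω a • (1 : 𝒜)) * (a - ω a • (1 : 𝒜)))





open PowerSeries

lemma posR_of {a : PowerSeries ℝ} {k : ℕ}
    (h0 : ∀ n, n < k → coeff n a = 0) (hk : 0 < coeff k a) : PosR a := by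
  have hne : a ≠ 0 := fun h => by simp [h] at hk
  have hord : a.order = (k : ℕ∞) := order_eq_nat.2 ⟨hk.ne', h0⟩
  refine ⟨hne, ?_⟩
  rw [hord, ENat.toNat_coe]
  exact hk

lemma posR_elim {a : PowerSeries ℝ} (h : PosR a) :
    (∀ n, n < a.order.toNat → coeff n a = 0) ∧ 0 < coeff a.order.toNat a := by
  refine ⟨fun n hn => coeff_of_lt_order n ?_, h.2⟩
  have hfin : a.order ≠ ⊤ := order_eq_top.not.2 h.1
  rw [← ENat.coe_toNat hfin]
  exact_mod_cast hn

lemma posR_elim' {a : PowerSeries ℝ} (h : PosR a) :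
    ∃ k : ℕ, (∀ n, n < k → coeff n a = 0) ∧ 0 < coeff k a :=
  ⟨a.order.toNat, posR_elim h⟩

lemma posR_add {a b : PowerSeries ℝ} (ha : PosR a) (hb : PosR b) : PosR (a + b) := by
  obtain ⟨ka, ha0, hak⟩ := posR_elim' ha
  obtain ⟨kb, hb0, hbk⟩ := posR_elim' hb
  have key : ∀ (x y : PowerSeries ℝ) (kx ky : ℕ), kx ≤ ky →
      (∀ n, n < kx → coeff n x = 0) → 0 < coeff kx x →
      (∀ n, n < ky → coeff n y = 0) → 0 < coeff ky y → PosR (x + y) := by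
    intro x y kx ky hk hx0 hxk hy0 hyk
    apply posR_of (k := kx)
    · intro n hn
      simp [hx0 n hn, hy0 n (lt_of_lt_of_le hn hk)]
    · rcases eq_or_lt_of_le hk with rfl | hlt
      · simpa using add_pos hxk hyk
      · simpa [hy0 kx hlt] using hxk
  rcases le_total ka kb with h | h
  · exact key a b ka kb h ha0 hak hb0 hbk
  · rw [add_comm]; exact key b a kb ka h hb0 hbk ha0 hak

lemma posR_mul {a b : PowerSeries ℝ} (ha : PosR a) (hb : PosR b) : PosR (a * b) := by
  obtain ⟨ka, ha0, hak⟩ := posR_elim' ha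
  obtain ⟨kb, hb0, hbk⟩ := posR_elim' hb
  apply posR_of (k := ka + kb)
  · intro n hn
    rw [coeff_mul]
    apply Finset.sum_eq_zero
    rintro ⟨i, j⟩ hij
    rw [Finset.HasAntidiagonal.mem_antidiagonal] at hij
    rcases lt_or_ge i ka with h | h
    · simp [ha0 i h]
    · have : j < kb := by omega
      simp [hb0 j this]
  · rw [coeff_mul]
    rw [Finset.sum_eq_single (ka, kb)]
    · exact mul_pos hak hbk
    · rintro ⟨i, j⟩ hij hne
      rw [Finset.HasAntidiagonal.mem_antidiagonal] at hij
      rcases lt_or_ge i ka with h | h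
      · simp [ha0 i h]
      · have : j < kb := by
          rcases eq_or_lt_of_le h with rfl | h'
          · exact absurd (by omega : j = kb) (by simpa using fun hh => hne (by simp [hh]))
          · omega
        simp [hb0 j this]
    · intro h
      exact absurd (Finset.HasAntidiagonal.mem_antidiagonal.2 (rfl : ka + kb = ka + kb)) h

lemma posR_tri {a : PowerSeries ℝ} (h : a ≠ 0) : PosR a ∨ PosR (-a) := by
  have hfin : a.order ≠ ⊤ := order_eq_top.not.2 h
  have hord : a.order = (a.order.toNat : ℕ∞) := (ENat.coe_toNat hfin).symm
  obtain ⟨hne, h0⟩ := order_eq_nat.1 hord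
  rcases lt_or_gt_of_ne hne with hlt | hgt
  · right
    apply posR_of (k := a.order.toNat)
    · intro n hn; simp [h0 n hn]
    · simpa using hlt
  · exact Or.inl ⟨h, hgt⟩

lemma posR_not_neg {a : PowerSeries ℝ} (ha : PosR a) (hb : PosR (-a)) : False := by
  obtain ⟨ka, ha0, hak⟩ := posR_elim' ha
  obtain ⟨kb, hb0, hbk⟩ := posR_elim' hb
  simp only [map_neg, neg_pos] at hbk hb0
  rcases lt_trichotomy ka kb with h | rfl | h
  · have := hb0 ka h
    simp only [neg_eq_zero] at this
    exact absurd this hak.ne'  -- check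
  · exact absurd hak (by linarith)
  · exact absurd (ha0 kb h) hbk.ne



/-- embedding ℝ⟦λ⟧ → ℂ⟦λ⟧ -/
noncomputable def iR : PowerSeries ℝ →+* PowerSeries ℂ :=
  PowerSeries.map (algebraMap ℝ ℂ)

def NonnegR (d : PowerSeries ℝ) : Prop := d = 0 ∨ PosR d

lemma nonnegR_add {a b : PowerSeries ℝ} (ha : NonnegR a) (hb : NonnegR b) : NonnegR (a + b) := by
  rcases ha with rfl | ha
  · simpa using hb
  rcases hb with rfl | hb
  · rw [add_zero]; exact Or.inr ha
  · exact Or.inr (posR_add ha hb)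

lemma nonnegR_mul {a b : PowerSeries ℝ} (ha : NonnegR a) (hb : NonnegR b) : NonnegR (a * b) := by
  rcases ha with rfl | ha
  · simp [NonnegR]
  rcases hb with rfl | hb
  · simp [NonnegR]
  · exact Or.inr (posR_mul ha hb)

lemma nonnegR_antisymm {a : PowerSeries ℝ} (ha : NonnegR a) (hb : NonnegR (-a)) : a = 0 := by
  rcases ha with rfl | ha
  · rfl
  rcases hb with h | hb
  · simpa using h
  · exact absurd hb (fun hh => posR_not_neg ha hh)

/-- if x ≥ 0, u < 0, x*u ≥ 0 then x = 0 -/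
lemma nonnegR_cancel {x u : PowerSeries ℝ} (hx : NonnegR x) (hu : PosR (-u))
    (hxu : NonnegR (x * u)) : x = 0 := by
  rcases hx with rfl | hx
  · rfl
  exfalso
  have hneg : PosR (-(x * u)) := by
    have := posR_mul hx hu
    rwa [mul_neg] at this
  rcases hxu with h | h
  · rw [h] at hneg
    rcases hneg with ⟨h1, _⟩
    simp at h1
  · exact posR_not_neg h hneg

lemma iR_injective : Function.Injective iR := by
  intro a b h
  ext n
  have := congrArg (PowerSeries.coeff n) h
  simp only [iR, PowerSeries.coeff_map] at this
  exact_mod_cast this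

lemma coeff_iR (n : ℕ) (d : PowerSeries ℝ) :
    PowerSeries.coeff n (iR d) = ((PowerSeries.coeff n d : ℝ) : ℂ) := by
  simp [iR, PowerSeries.coeff_map, Complex.coe_algebraMap]

lemma conjPS_iR (d : PowerSeries ℝ) : conjPS (iR d) = iR d := by
  ext n
  simp [conjPS, PowerSeries.coeff_map, coeff_iR, Complex.conj_ofReal]

lemma conjPS_conjPS (x : PowerSeries ℂ) : conjPS (conjPS x) = x := by
  ext n
  simp [conjPS, PowerSeries.coeff_map]

lemma coeff_conjPS (n : ℕ) (x : PowerSeries ℂ) :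
    PowerSeries.coeff n (conjPS x) = (starRingEnd ℂ) (PowerSeries.coeff n x) := by
  simp [conjPS, PowerSeries.coeff_map]

/-- a conj-fixed series is real -/
lemma real_of_conjPS_fixed {x : PowerSeries ℂ} (h : conjPS x = x) :
    ∃ d : PowerSeries ℝ, x = iR d := by
  refine ⟨PowerSeries.mk fun n => (PowerSeries.coeff n x).re, ?_⟩
  ext n
  rw [coeff_iR, PowerSeries.coeff_mk]
  have hn : (starRingEnd ℂ) (PowerSeries.coeff n x) = PowerSeries.coeff n x := by
    rw [← coeff_conjPS, h]
  exact (Complex.conj_eq_iff_re.1 hn).symm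

/-- z * conj z is a nonneg real series, strictly positive if z ≠ 0 -/
lemma mulConj (z : PowerSeries ℂ) :
    ∃ s : PowerSeries ℝ, z * conjPS z = iR s ∧ NonnegR s ∧ (z ≠ 0 → PosR s) := by
  have hfix : conjPS (z * conjPS z) = z * conjPS z := by
    rw [map_mul, conjPS_conjPS, mul_comm]
  obtain ⟨s, hs⟩ := real_of_conjPS_fixed hfix
  rcases eq_or_ne z 0 with rfl | hz
  · refine ⟨s, hs, ?_, fun h => absurd rfl h⟩
    left
    apply iR_injective
    rw [← hs]
    simp
  · have hfin : z.order ≠ ⊤ := PowerSeries.order_eq_top.not.2 hz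
    set m := z.order.toNat with hm
    have hord : z.order = (m : ℕ∞) := (ENat.coe_toNat hfin).symm
    obtain ⟨hne, h0⟩ := PowerSeries.order_eq_nat.1 hord
    have hcoeff : ∀ n, PowerSeries.coeff n (z * conjPS z)
        = ((PowerSeries.coeff n s : ℝ) : ℂ) := by
      intro n; rw [hs, coeff_iR]
    have hPos : PosR s := by
      apply posR_of (k := m + m)
      · intro n hn
        have : PowerSeries.coeff n (z * conjPS z) = 0 := by
          rw [PowerSeries.coeff_mul]
          apply Finset.sum_eq_zero
          rintro ⟨i, j⟩ hij
          rw [Finset.HasAntidiagonal.mem_antidiagonal] at hij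
          rcases lt_or_ge i m with h | h
          · simp [h0 i h]
          · have hj : j < m := by omega
            rw [coeff_conjPS, h0 j hj]
            simp
        rw [hcoeff n] at this
        exact_mod_cast this
      · have : PowerSeries.coeff (m + m) (z * conjPS z)
            = PowerSeries.coeff m z * (starRingEnd ℂ) (PowerSeries.coeff m z) := by
          rw [PowerSeries.coeff_mul, Finset.sum_eq_single (m, m)]
          · rw [coeff_conjPS]
          · rintro ⟨i, j⟩ hij hne2
            rw [Finset.HasAntidiagonal.mem_antidiagonal] at hij
            rcases lt_or_ge i m with h | h
            · simp [h0 i h]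
            · have hj : j < m := by
                rcases eq_or_lt_of_le h with rfl | h'
                · exact absurd (by omega : j = m) (by simpa using fun hh => hne2 (by simp [hh]))
                · omega
              rw [coeff_conjPS, h0 j hj]
              simp
          · intro h
            exact absurd (Finset.HasAntidiagonal.mem_antidiagonal.2 (rfl : m + m = m + m)) h
        rw [hcoeff (m + m), Complex.mul_conj] at this
        have h2 : (PowerSeries.coeff (m + m) s : ℝ)
            = Complex.normSq (PowerSeries.coeff m z) := by exact_mod_cast this
        rw [h2]
        exact Complex.normSq_pos.2 hne
    exact ⟨s, hs, Or.inr hPos, fun _ => hPos⟩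



lemma herm {𝒜 : Type*} [Ring 𝒜] [Algebra (PowerSeries ℂ) 𝒜] [StarRing 𝒜]
    (hantilinear : ∀ (c : PowerSeries ℂ) (a : 𝒜), star (c • a) = conjPS c • star a)
    (ω : 𝒜 →ₗ[PowerSeries ℂ] PowerSeries ℂ)
    (hreal : ∀ a : 𝒜, conjPS (ω (star a * a)) = ω (star a * a))
    {x y : 𝒜} (hx : star x = x) (hy : star y = y) :
    conjPS (ω (x * y)) = ω (y * x) := by
  set I1 : PowerSeries ℂ := PowerSeries.C Complex.I with hI1
  have hconjI : conjPS I1 = -I1 := by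
    rw [hI1]
    show PowerSeries.map _ _ = _
    rw [PowerSeries.map_C]
    simp [Complex.conj_I, map_neg]
  have hI1ne : I1 ≠ 0 := fun h => by
    have := congrArg (PowerSeries.constantCoeff) h
    rw [hI1] at this
    simp only [PowerSeries.constantCoeff_C, map_zero] at this
    exact Complex.I_ne_zero this
  have h2ne : (2 : PowerSeries ℂ) ≠ 0 := fun h => by
    have := congrArg (PowerSeries.constantCoeff) h
    norm_num [map_ofNat] at this
  have e1 : star (x + y) * (x + y) = x * x + (x * y + (y * x + y * y)) := by
    rw [star_add, hx, hy, add_mul, mul_add, mul_add]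
    abel
  have e2 : star (x + I1 • y) * (x + I1 • y)
      = x * x + (I1 • (x * y) + ((-I1) • (y * x) + y * y)) := by
    rw [star_add, hantilinear, hx, hy, hconjI]
    simp only [add_mul, mul_add, smul_add, smul_mul_assoc, mul_smul_comm, smul_smul]
    have hII : I1 * (-I1) = 1 := by
      rw [mul_neg, hI1, ← map_mul, Complex.I_mul_I]
      simp
    rw [hII, one_smul]
    abel
  have h1 := hreal (x + y)
  rw [e1] at h1
  have h2 := hreal (x + I1 • y)
  rw [e2] at h2
  simp only [map_add, map_smul, smul_eq_mul, map_mul, map_neg, hconjI] at h1 h2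
  have hA : conjPS (ω (x * x)) = ω (x * x) := by
    have := hreal x; rwa [hx] at this
  have hB : conjPS (ω (y * y)) = ω (y * y) := by
    have := hreal y; rwa [hy] at this
  rw [hA, hB] at h1 h2
  have h2' : I1 * (conjPS (ω (y * x)) - conjPS (ω (x * y)))
      = I1 * (ω (x * y) - ω (y * x)) := by linear_combination h2
  have h2'' := mul_left_cancel₀ hI1ne h2'
  apply mul_left_cancel₀ h2ne
  linear_combination h1 - h2''



lemma posR_four : PosR (4 : PowerSeries ℝ) := by
  apply posR_of (k := 0)
  · omega
  · rw [PowerSeries.coeff_zero_eq_constantCoeff, map_ofNat]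
    norm_num

lemma nonnegR_sq (t : PowerSeries ℝ) : NonnegR (t * t) := by
  rcases eq_or_ne t 0 with rfl | ht
  · left; simp
  rcases posR_tri ht with h | h
  · exact Or.inr (posR_mul h h)
  · right
    have := posR_mul h h
    rwa [neg_mul_neg] at this


/-- Uncertainty relation: if `ω` is a state on a unital `*`-algebra `𝒜` over `ℂ⟦λ⟧`,
then for Hermitean `f`, `g` one has
`4 · Var_ω(f) · Var_ω(g) ≥ ω([f,g]) · (ω([f,g]))*` in the ordered ring `ℝ⟦λ⟧`. -/
theorem stmt4 {𝒜 : Type*} [Ring 𝒜] [Algebra (PowerSeries ℂ) 𝒜] [StarRing 𝒜]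
    (hantilinear : ∀ (c : PowerSeries ℂ) (a : 𝒜), star (c • a) = conjPS c • star a)
    (ω : 𝒜 →ₗ[PowerSeries ℂ] PowerSeries ℂ)
    (hpos : ∀ a : 𝒜, leR 0 (ω (star a * a)))
    (hnormalized : ω 1 = 1)
    (f g : 𝒜) (hf : star f = f) (hg : star g = g) :
    leR (ω (f * g - g * f) * conjPS (ω (f * g - g * f)))
      (4 * Var ω f * Var ω g) := by
  classical
  have nonnegC : ∀ {x : PowerSeries ℂ}, leR 0 x → ∃ d, x = iR d ∧ NonnegR d := by
    rintro x ⟨d, hd, hnn⟩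
    rw [sub_zero] at hd
    exact ⟨d, hd, hnn⟩
  have hreal : ∀ a : 𝒜, conjPS (ω (star a * a)) = ω (star a * a) := fun a => by
    obtain ⟨d, hd, _⟩ := nonnegC (hpos a)
    rw [hd]; exact conjPS_iR d
  have hrf : conjPS (ω f) = ω f := by
    have := herm hantilinear ω hreal (star_one 𝒜) hf
    simpa using this
  have hrg : conjPS (ω g) = ω g := by
    have := herm hantilinear ω hreal (star_one 𝒜) hg
    simpa using this
  set F := f - ω f • (1 : 𝒜) with hFdef
  set G := g - ω g • (1 : 𝒜) with hGdef
  have hFstar : star F = F := by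
    rw [hFdef, star_sub, hf, hantilinear, star_one, hrf]
  have hGstar : star G = G := by
    rw [hGdef, star_sub, hg, hantilinear, star_one, hrg]
  have hVarf : Var ω f = ω (F * F) := by
    have h1 : Var ω f = ω (star F * F) := rfl
    rw [h1, hFstar]
  have hVarg : Var ω g = ω (G * G) := by
    have h1 : Var ω g = ω (star G * G) := rfl
    rw [h1, hGstar]
  set z := ω (F * G) with hz
  have hGF : ω (G * F) = conjPS z :=
    (herm hantilinear ω hreal hFstar hGstar).symm
  obtain ⟨p, hp, hpnn⟩ := nonnegC (by have := hpos F; rwa [hFstar] at this :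
    leR 0 (ω (F * F)))
  obtain ⟨r, hr, hrnn⟩ := nonnegC (by have := hpos G; rwa [hGstar] at this :
    leR 0 (ω (G * G)))
  obtain ⟨s, hsz, hsnn, hspos⟩ := mulConj z
  obtain ⟨t, ht⟩ := real_of_conjPS_fixed (x := z + conjPS z)
    (by rw [map_add, conjPS_conjPS, add_comm])
  -- Gram positivity
  have key : ∀ c₁ c₂ : PowerSeries ℂ, ∃ d : PowerSeries ℝ,
      conjPS c₁ * c₁ * iR p + conjPS c₁ * c₂ * z + conjPS c₂ * c₁ * conjPS z
        + conjPS c₂ * c₂ * iR r = iR d ∧ NonnegR d := by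
    intro c₁ c₂
    have hexp : star (c₁ • F + c₂ • G) * (c₁ • F + c₂ • G)
        = (conjPS c₁ * c₁) • (F * F) + ((conjPS c₁ * c₂) • (F * G)
          + ((conjPS c₂ * c₁) • (G * F) + (conjPS c₂ * c₂) • (G * G))) := by
      rw [star_add, hantilinear, hantilinear, hFstar, hGstar]
      simp only [add_mul, mul_add, smul_add, smul_mul_assoc, mul_smul_comm, smul_smul]
      rw [mul_comm c₁ (conjPS c₁), mul_comm c₁ (conjPS c₂), mul_comm c₂ (conjPS c₁),
        mul_comm c₂ (conjPS c₂)]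
      abel
    obtain ⟨d, hd, hnn⟩ := nonnegC (hpos (c₁ • F + c₂ • G))
    rw [hexp] at hd
    simp only [map_add, map_smul, smul_eq_mul] at hd
    rw [hp, hr, hGF, ← hz] at hd
    exact ⟨d, by linear_combination hd, hnn⟩
  -- instance 1 : p * (p*r - s) ≥ 0
  have K1 : NonnegR (p * (p * r - s)) := by
    obtain ⟨d, hd, hnn⟩ := key (-z) (iR p)
    have : iR (p * (p * r - s)) = iR d := by
      rw [← hd]
      simp only [map_neg, conjPS_iR, map_mul, map_sub]
      linear_combination (iR p) * hsz
    rwa [iR_injective this]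
  -- instance 2 : r * (r*p - s) ≥ 0
  have K2 : NonnegR (r * (r * p - s)) := by
    obtain ⟨d, hd, hnn⟩ := key (iR r) (-(conjPS z))
    have : iR (r * (r * p - s)) = iR d := by
      rw [← hd]
      simp only [map_neg, conjPS_iR, conjPS_conjPS, map_mul, map_sub]
      linear_combination (iR r) * hsz
    rwa [iR_injective this]
  -- instance 3 : s*p - 2*s + r ≥ 0
  have K3 : NonnegR (s * p - 2 * s + r) := by
    obtain ⟨d, hd, hnn⟩ := key (-z) 1
    have : iR (s * p - 2 * s + r) = iR d := by
      rw [← hd]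
      simp only [map_neg, conjPS_iR, map_one, map_mul, map_sub, map_add, map_ofNat]
      linear_combination (2 - iR p) * hsz
    rwa [iR_injective this]
  -- Cauchy-Schwarz
  have hmain : NonnegR (p * r - s) := by
    by_contra hcon
    have hne : p * r - s ≠ 0 := fun h => hcon (Or.inl h)
    have hposneg : PosR (-(p * r - s)) :=
      (posR_tri hne).resolve_left fun h => hcon (Or.inr h)
    have hp0 : p = 0 := nonnegR_cancel hpnn hposneg K1
    have hr0 : r = 0 := by
      refine nonnegR_cancel hrnn ?_ K2
      rwa [mul_comm r p]
    have hz0 : z = 0 := by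
      by_contra hzne
      have hs := hspos hzne
      have hneg : NonnegR (-(s + s)) := by
        have := K3
        rw [hp0, hr0] at this
        have he : s * 0 - 2 * s + 0 = -(s + s) := by ring
        rwa [he] at this
      have h2s : PosR (s + s) := posR_add hs hs
      rcases hneg with h | h
      · rw [neg_eq_zero] at h
        exact h2s.1 h
      · exact posR_not_neg h2s h
    have hs0 : s = 0 := by
      apply iR_injective
      rw [← hsz, hz0]
      simp
    exact hposneg.1 (by rw [hp0, hs0]; ring)
  -- commutator identity
  have hFGc : F * G - G * F = f * g - g * f := by
    rw [hFdef, hGdef]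
    simp only [sub_mul, mul_sub, smul_sub, smul_mul_assoc, mul_smul_comm, smul_smul,
      one_mul, mul_one]
    rw [mul_comm (ω g) (ω f)]
    abel
  have hωC : ω (f * g - g * f) = z - conjPS z := by
    rw [← hFGc, map_sub, ← hz, hGF]
  refine ⟨4 * (p * r - s) + t * t, ?_, ?_⟩
  · rw [hVarf, hVarg, hp, hr, hωC]
    have hconj : conjPS (z - conjPS z) = conjPS z - z := by
      rw [map_sub, conjPS_conjPS]
    rw [hconj]
    show _ = iR (4 * (p * r - s) + t * t)
    simp only [map_add, map_mul, map_sub, map_ofNat]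
    linear_combination (-4 : PowerSeries ℂ) * hsz + (z + conjPS z + iR t) * ht
  · exact nonnegR_add (nonnegR_mul (Or.inr posR_four) hmain) (nonnegR_sq t)
end

section
/- Let 𝒜 be a unital *-algebra over ℂ and ⋆ a Hermitean formal deformation of 𝒜. If ω = Σ_{r≥0} λ^r ω_r : 𝒜⟦λ⟧ → ℂ⟦λ⟧ is a ℂ⟦λ⟧-linear functional (determined by ℂ-linear maps ω_r : 𝒜 → ℂ) that is positive with respect to ⋆, i.e. ω(a* ⋆ a) ≥ 0 in ℝ⟦λ⟧ for all a ∈ 𝒜⟦λ⟧, then its classical limit ω_0 is a positive linear functional on the undeformed algebra: ω_0(a* a) ≥ 0 for all a ∈ 𝒜. -/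
open scoped ComplexOrder

/-- Let `𝒜` be a unital `*`-algebra over `ℂ` and `⋆` a Hermitean formal deformation of
`𝒜`, given by `ℂ`-bilinear maps `C r : 𝒜 → 𝒜 → 𝒜` with `C 0` the original product.
Elements of `𝒜⟦λ⟧` are represented as sequences `ℕ → 𝒜` (the coefficients), the
deformed product is `(a ⋆ b)ₙ = ∑_{r+i+j=n} C r (aᵢ) (bⱼ)`, the involution is
coefficientwise (`λ* = λ`), and a `ℂ⟦λ⟧`-linear functional `ω = ∑ λ^r ω_r` is encoded
by its coefficient functionals `ω_r : 𝒜 → ℂ`, so that `ω(a)ₙ = ∑_{i+j=n} ω_i (aⱼ)`.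
If `ω` is positive with respect to `⋆`, i.e. `ω(a* ⋆ a) ≥ 0` in `ℝ⟦λ⟧` for all `a`,
then its classical limit `ω_0` is a positive linear functional on the undeformed
algebra: `ω_0(a* a) ≥ 0` for all `a ∈ 𝒜`. -/
theorem stmt5 {𝒜 : Type*} [Ring 𝒜] [Algebra ℂ 𝒜] [StarRing 𝒜] [StarModule ℂ 𝒜]
    (C : ℕ → 𝒜 →ₗ[ℂ] 𝒜 →ₗ[ℂ] 𝒜)
    (mul : (ℕ → 𝒜) → (ℕ → 𝒜) → (ℕ → 𝒜))
    (hmul : ∀ a b : ℕ → 𝒜, ∀ n : ℕ, mul a b n =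
      ∑ p ∈ Finset.HasAntidiagonal.antidiagonal n, ∑ q ∈ Finset.HasAntidiagonal.antidiagonal p.2, C p.1 (a q.1) (b q.2))
    (hC0 : ∀ x y : 𝒜, C 0 x y = x * y)
    (hassoc : ∀ a b c : ℕ → 𝒜, mul (mul a b) c = mul a (mul b c))
    (hone_left : ∀ a : ℕ → 𝒜, mul (fun n => if n = 0 then 1 else 0) a = a)
    (hone_right : ∀ a : ℕ → 𝒜, mul a (fun n => if n = 0 then 1 else 0) = a)
    (hstar : ∀ a b : ℕ → 𝒜,
      (fun n => star (mul a b n)) = mul (fun n => star (b n)) (fun n => star (a n)))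
    (ω : ℕ → 𝒜 →ₗ[ℂ] ℂ)
    (hpos : ∀ a : ℕ → 𝒜, leR 0 (PowerSeries.mk fun n =>
      ∑ p ∈ Finset.HasAntidiagonal.antidiagonal n, ω p.1 (mul (fun m => star (a m)) a p.2))) :
    ∀ a : 𝒜, 0 ≤ ω 0 (star a * a) := by
  intro a
  obtain ⟨d, hd, hd0⟩ := hpos (fun n => if n = 0 then a else 0)
  have hc0 : ω 0 (star a * a) = (PowerSeries.coeff 0) (PowerSeries.map (algebraMap ℝ ℂ) d) := by
    rw [← hd]
    simp [hmul, hC0, apply_ite star]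
  have hdnn : (0 : ℝ) ≤ PowerSeries.coeff 0 d := by
    rcases hd0 with h | ⟨hne, hposd⟩
    · simp [h]
    · by_cases hord : d.order = 0
      · simpa [hord] using le_of_lt hposd
      · have : ((0 : ℕ) : ℕ∞) < d.order := by
          simpa using pos_iff_ne_zero.mpr hord
        rw [PowerSeries.coeff_of_lt_order 0 this]
  rw [hc0]
  simpa using hdnn
end
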